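/- Let ℓ ≥ 2 and k > ℓ be integers. Then ᾱ({1, 2, …, ℓ−1, k}) = 1/ℓ if k is not divisible by ℓ, and ᾱ({1, 2, …, ℓ−1, k}) = k/(ℓ(k+1)) if k is divisible by ℓ. -/

import Mathlib

open Filter

/-- The upper density of a set of integers. -/
noncomputable def density (A : Set ℤ) : ℝ :=
  Filter.limsup
    (fun N : ℕ => ((A ∩ Set.Icc (-(N : ℤ)) (N : ℤ)).ncard : ℝ) / (2 * (N : ℝ) + 1))
    Filter.atTop

/-- A set of integers is independent in the distance graph `G(S)` if no two distinct
elements differ by an element of `S`. -/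
def IsIndepSet (S : Finset ℕ) (A : Set ℤ) : Prop :=
  ∀ a ∈ A, ∀ b ∈ A, a ≠ b → (a - b).natAbs ∉ S

/-- The independence ratio of the distance graph `G(S)`. -/
noncomputable def indRatio (S : Finset ℕ) : ℝ :=
  sSup (density '' {A : Set ℤ | IsIndepSet S A})

section Aux

lemma win_le (A : Set ℤ) (p : ℤ) (hp : 0 < p) (c : ℕ)
    (hw : ∀ y : ℤ, (A ∩ Set.Ico y (y + p)).ncard ≤ c) (j : ℕ) (x : ℤ) :
    (A ∩ Set.Ico x (x + j * p)).ncard ≤ j * c := by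
  induction j generalizing x with
  | zero => simp
  | succ n ih =>
    have hsplit : Set.Ico x (x + (n + 1 : ℕ) * p) =
        Set.Ico x (x + n * p) ∪ Set.Ico (x + n * p) (x + n * p + p) := by
      rw [Set.Ico_union_Ico_eq_Ico (le_add_of_nonneg_right
        (mul_nonneg (Int.natCast_nonneg n) hp.le)) (by linarith)]
      congr 1
      push_cast
      ring
    rw [hsplit, Set.inter_union_distrib_left]
    calc (A ∩ Set.Ico x (x + n * p) ∪ A ∩ Set.Ico (x + n * p) (x + n * p + p)).ncard
        ≤ (A ∩ Set.Ico x (x + n * p)).ncard +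
          (A ∩ Set.Ico (x + n * p) (x + n * p + p)).ncard := Set.ncard_union_le _ _
      _ ≤ n * c + c := add_le_add (ih x) (hw _)
      _ = (n + 1) * c := by ring

lemma win_eq (A : Set ℤ) (p : ℤ) (hp : 0 < p) (c : ℕ)
    (hw : ∀ y : ℤ, (A ∩ Set.Ico y (y + p)).ncard = c) (j : ℕ) (x : ℤ) :
    (A ∩ Set.Ico x (x + j * p)).ncard = j * c := by
  induction j generalizing x with
  | zero => simp
  | succ n ih =>
    have hsplit : Set.Ico x (x + (n + 1 : ℕ) * p) =
        Set.Ico x (x + n * p) ∪ Set.Ico (x + n * p) (x + n * p + p) := by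
      rw [Set.Ico_union_Ico_eq_Ico (le_add_of_nonneg_right
        (mul_nonneg (Int.natCast_nonneg n) hp.le)) (by linarith)]
      congr 1
      push_cast
      ring
    rw [hsplit, Set.inter_union_distrib_left, Set.ncard_union_eq ?hd ?h1 ?h2, ih x, hw]
    · ring
    case hd =>
      exact (Set.Ico_disjoint_Ico_same).mono inf_le_right inf_le_right
    case h1 => exact (Set.finite_Ico _ _).inter_of_right _
    case h2 => exact (Set.finite_Ico _ _).inter_of_right _

lemma tendsto_aux (c p : ℝ) :
    Tendsto (fun N : ℕ => c / p + c / (2 * (N:ℝ) + 1)) atTop (nhds (c / p)) := by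
  have h2 : Tendsto (fun N : ℕ => 2 * (N:ℝ) + 1) atTop atTop := by
    apply Filter.tendsto_atTop_add_const_right
    exact (tendsto_natCast_atTop_atTop).const_mul_atTop two_pos
  have h3 : Tendsto (fun N : ℕ => c / (2 * (N:ℝ) + 1)) atTop (nhds 0) :=
    Tendsto.div_atTop tendsto_const_nhds h2
  simpa using tendsto_const_nhds.add h3

lemma tendsto_aux' (c p : ℝ) :
    Tendsto (fun N : ℕ => c / p - c / (2 * (N:ℝ) + 1)) atTop (nhds (c / p)) := by
  have h2 : Tendsto (fun N : ℕ => 2 * (N:ℝ) + 1) atTop atTop := by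
    apply Filter.tendsto_atTop_add_const_right
    exact (tendsto_natCast_atTop_atTop).const_mul_atTop two_pos
  have h3 : Tendsto (fun N : ℕ => c / (2 * (N:ℝ) + 1)) atTop (nhds 0) :=
    Tendsto.div_atTop tendsto_const_nhds h2
  simpa using tendsto_const_nhds.sub h3

lemma f_le (A : Set ℤ) (p c : ℕ) (hp : 0 < p)
    (hw : ∀ y : ℤ, (A ∩ Set.Ico y (y + (p:ℤ))).ncard ≤ c) (N : ℕ) :
    ((A ∩ Set.Icc (-(N : ℤ)) (N : ℤ)).ncard : ℝ) / (2 * (N : ℝ) + 1) ≤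
      (c:ℝ) / p + (c:ℝ) / (2 * (N:ℝ) + 1) := by
  obtain ⟨q, hqdef⟩ : ∃ q : ℕ, q = (2 * N + 1) / p + 1 := ⟨_, rfl⟩
  have h1' := Nat.div_add_mod (2 * N + 1) p
  have h2' := Nat.mod_lt (2 * N + 1) hp
  have hqp : 2 * N + 1 ≤ q * p := by
    calc 2 * N + 1 = p * ((2 * N + 1) / p) + (2 * N + 1) % p := h1'.symm
      _ ≤ p * ((2 * N + 1) / p) + p := by omega
      _ = q * p := by rw [hqdef]; ring
  have hsub : Set.Icc (-(N:ℤ)) (N:ℤ) ⊆ Set.Ico (-(N:ℤ)) (-(N:ℤ) + q * p) := by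
    intro x hx
    simp only [Set.mem_Icc] at hx
    simp only [Set.mem_Ico]
    have hc : (2 * (N:ℤ) + 1) ≤ (q:ℤ) * (p:ℤ) := by exact_mod_cast hqp
    omega
  have hcount : (A ∩ Set.Icc (-(N:ℤ)) (N:ℤ)).ncard ≤ q * c := by
    calc (A ∩ Set.Icc (-(N:ℤ)) (N:ℤ)).ncard
        ≤ (A ∩ Set.Ico (-(N:ℤ)) (-(N:ℤ) + q * p)).ncard := by
          exact Set.ncard_le_ncard (Set.inter_subset_inter_right _ hsub)
            ((Set.finite_Ico _ _).inter_of_right _)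
      _ ≤ q * c := win_le A p (by exact_mod_cast hp) c hw q _
  have hNpos : (0:ℝ) < 2 * (N:ℝ) + 1 := by positivity
  have hppos : (0:ℝ) < (p:ℝ) := by exact_mod_cast hp
  have hq_le : (q : ℝ) ≤ (2 * (N:ℝ) + 1) / p + 1 := by
    have h3 : ((2 * N + 1) / p : ℕ) ≤ ((2 * N + 1 : ℕ) : ℝ) / (p:ℕ) := Nat.cast_div_le
    have h4 : (q:ℝ) = ((2 * N + 1) / p : ℕ) + 1 := by exact_mod_cast congrArg (Nat.cast (R := ℝ)) hqdef
    push_cast at h3 h4 ⊢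
    linarith
  have h1 : ((A ∩ Set.Icc (-(N:ℤ)) (N:ℤ)).ncard : ℝ) ≤ (q:ℝ) * c := by exact_mod_cast hcount
  rw [div_le_iff₀ hNpos]
  have hgoal : ((c:ℝ) / p + (c:ℝ) / (2 * (N:ℝ) + 1)) * (2 * (N:ℝ) + 1)
      = (2 * (N:ℝ) + 1) / p * c + c := by field_simp
  rw [hgoal]
  calc ((A ∩ Set.Icc (-(N:ℤ)) (N:ℤ)).ncard : ℝ) ≤ (q:ℝ) * c := h1
    _ ≤ ((2 * (N:ℝ) + 1) / p + 1) * c := by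
        apply mul_le_mul_of_nonneg_right hq_le (by positivity)
    _ = (2 * (N:ℝ) + 1) / p * c + c := by ring

lemma f_ge (A : Set ℤ) (p c : ℕ) (hp : 0 < p)
    (hw : ∀ y : ℤ, (A ∩ Set.Ico y (y + (p:ℤ))).ncard = c) (N : ℕ) :
    (c:ℝ) / p - (c:ℝ) / (2 * (N:ℝ) + 1) ≤
      ((A ∩ Set.Icc (-(N : ℤ)) (N : ℤ)).ncard : ℝ) / (2 * (N : ℝ) + 1) := by
  obtain ⟨q, hqdef⟩ : ∃ q : ℕ, q = (2 * N + 1) / p := ⟨_, rfl⟩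
  have h1' := Nat.div_add_mod (2 * N + 1) p
  have h2' := Nat.mod_lt (2 * N + 1) hp
  have hqp : q * p ≤ 2 * N + 1 := by rw [hqdef]; exact Nat.div_mul_le_self _ _
  have hq2 : 2 * N + 1 < (q + 1) * p := by
    calc 2 * N + 1 = p * q + (2 * N + 1) % p := by rw [hqdef]; exact h1'.symm
      _ < p * q + p := by omega
      _ = (q + 1) * p := by ring
  have hsub : Set.Ico (-(N:ℤ)) (-(N:ℤ) + q * p) ⊆ Set.Icc (-(N:ℤ)) (N:ℤ) := by
    intro x hx
    simp only [Set.mem_Ico] at hx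
    simp only [Set.mem_Icc]
    have hc : (q:ℤ) * (p:ℤ) ≤ 2 * (N:ℤ) + 1 := by exact_mod_cast hqp
    omega
  have hcount : q * c ≤ (A ∩ Set.Icc (-(N:ℤ)) (N:ℤ)).ncard := by
    calc q * c = (A ∩ Set.Ico (-(N:ℤ)) (-(N:ℤ) + q * p)).ncard :=
          (win_eq A p (by exact_mod_cast hp) c hw q _).symm
      _ ≤ (A ∩ Set.Icc (-(N:ℤ)) (N:ℤ)).ncard := by
          exact Set.ncard_le_ncard (Set.inter_subset_inter_right _ hsub)
            ((Set.finite_Icc _ _).inter_of_right _)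
  have hNpos : (0:ℝ) < 2 * (N:ℝ) + 1 := by positivity
  have hppos : (0:ℝ) < (p:ℝ) := by exact_mod_cast hp
  have hq_ge : (2 * (N:ℝ) + 1) / p - 1 ≤ (q : ℝ) := by
    have h3 : (2 * N + 1 : ℝ) < ((q:ℝ) + 1) * p := by exact_mod_cast hq2
    rw [sub_le_iff_le_add, div_le_iff₀ hppos]
    push_cast at h3 ⊢
    nlinarith
  have h1 : (q:ℝ) * c ≤ ((A ∩ Set.Icc (-(N:ℤ)) (N:ℤ)).ncard : ℝ) := by exact_mod_cast hcount
  rw [le_div_iff₀ hNpos]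
  have hgoal : ((c:ℝ) / p - (c:ℝ) / (2 * (N:ℝ) + 1)) * (2 * (N:ℝ) + 1)
      = ((2 * (N:ℝ) + 1) / p - 1) * c := by field_simp
  rw [hgoal]
  calc ((2 * (N:ℝ) + 1) / p - 1) * c ≤ (q:ℝ) * c :=
        mul_le_mul_of_nonneg_right hq_ge (by positivity)
    _ ≤ _ := h1

lemma density_le (A : Set ℤ) (p c : ℕ) (hp : 0 < p)
    (hw : ∀ y : ℤ, (A ∩ Set.Ico y (y + (p:ℤ))).ncard ≤ c) :
    density A ≤ (c:ℝ) / p := by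
  have hg := tendsto_aux (c:ℝ) (p:ℝ)
  have hle := limsup_le_limsup (Filter.Eventually.of_forall (f_le A p c hp hw))
    (isCoboundedUnder_le_of_le atTop (fun N => by positivity))
    hg.isBoundedUnder_le
  rwa [hg.limsup_eq] at hle

lemma density_eq (A : Set ℤ) (p c : ℕ) (hp : 0 < p)
    (hw : ∀ y : ℤ, (A ∩ Set.Ico y (y + (p:ℤ))).ncard = c) :
    density A = (c:ℝ) / p := by
  have ht : Tendsto (fun N : ℕ => ((A ∩ Set.Icc (-(N : ℤ)) (N : ℤ)).ncard : ℝ) / (2 * (N : ℝ) + 1))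
      atTop (nhds ((c:ℝ)/p)) := by
    apply tendsto_of_tendsto_of_tendsto_of_le_of_le (tendsto_aux' (c:ℝ) (p:ℝ)) (tendsto_aux (c:ℝ) (p:ℝ))
      (f_ge A p c hp hw) (f_le A p c hp (fun y => (hw y).le))
  exact ht.limsup_eq

lemma periodic_count (p : ℤ) (hp : 0 < p) (R : Set ℤ) (hR : R ⊆ Set.Ico 0 p) (y : ℤ) :
    ({x : ℤ | x % p ∈ R} ∩ Set.Ico y (y + p)).ncard = R.ncard := by
  have key : ∀ r ∈ R, ∀ s ∈ R, (y + (r - y) % p = y + (s - y) % p) → r = s := by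
    intro r hr s hs h
    have h' : (r - y) % p = (s - y) % p := by omega
    have hd : p ∣ (r - y) - (s - y) := Int.dvd_of_emod_eq_zero (by
      rw [Int.sub_emod, h', sub_self, Int.zero_emod])
    have hr' := hR hr; have hs' := hR hs
    simp only [Set.mem_Ico] at hr' hs'
    have : (r - y) - (s - y) = 0 := Int.eq_zero_of_abs_lt_dvd hd (by
      rw [abs_lt]; omega)
    omega
  have himg : {x : ℤ | x % p ∈ R} ∩ Set.Ico y (y + p) = (fun r => y + (r - y) % p) '' R := by
    ext x
    simp only [Set.mem_inter_iff, Set.mem_setOf_eq, Set.mem_Ico, Set.mem_image]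
    constructor
    · rintro ⟨hxR, hx1, hx2⟩
      refine ⟨x % p, hxR, ?_⟩
      have e1 : (x % p - y) % p = (x - y) % p := by
        conv_rhs => rw [Int.sub_emod]
        rw [Int.sub_emod, Int.emod_emod_of_dvd _ dvd_rfl]
      have e2 : (x - y) % p = x - y := Int.emod_eq_of_lt (by omega) (by omega)
      rw [e1, e2]; ring
    · rintro ⟨r, hr, rfl⟩
      have h1 : 0 ≤ (r - y) % p := Int.emod_nonneg _ hp.ne'
      have h2 : (r - y) % p < p := Int.emod_lt_of_pos _ hp
      refine ⟨?_, by omega, by omega⟩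
      have hr' := hR hr
      simp only [Set.mem_Ico] at hr'
      have e1 : (y + (r - y) % p) % p = (y + (r - y)) % p := by
        conv_rhs => rw [Int.add_emod]
        rw [Int.add_emod, Int.emod_emod_of_dvd _ dvd_rfl]
      have e2 : y + (r - y) = r := by ring
      have e3 : r % p = r := Int.emod_eq_of_lt hr'.1 hr'.2
      rw [e1, e2, e3]
      exact hr
  rw [himg, Set.ncard_image_of_injOn key]

lemma R2_card (l m : ℤ) (hl : 0 < l) :
    ((fun j => l * j) '' Set.Ico (0:ℤ) m).ncard = m.toNat := by
  rw [Set.ncard_image_of_injective _ (mul_right_injective₀ hl.ne')]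
  have : (Set.Ico (0:ℤ) m) = ↑(Finset.Ico (0:ℤ) m) := by simp
  rw [this, Set.ncard_coe_finset, Int.card_Ico]
  simp

lemma indep_window_one (S : Finset ℕ) (A : Set ℤ) (ℓ : ℕ) (hℓ : 2 ≤ ℓ)
    (hsub : ∀ n : ℕ, 1 ≤ n → n ≤ ℓ - 1 → n ∈ S) (hA : IsIndepSet S A) (y : ℤ) :
    (A ∩ Set.Ico y (y + (ℓ:ℤ))).ncard ≤ 1 := by
  rw [Set.ncard_le_one ((Set.finite_Ico _ _).inter_of_right _)]
  rintro a ⟨haA, ha⟩ b ⟨hbA, hb⟩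
  by_contra hab
  simp only [Set.mem_Ico] at ha hb
  have h1 : 1 ≤ (a - b).natAbs := by omega
  have h2 : (a - b).natAbs ≤ ℓ - 1 := by omega
  exact hA a haA b hbA hab (hsub _ h1 h2)

lemma indep_window_m (S : Finset ℕ) (A : Set ℤ) (ℓ k m : ℕ) (hℓ : 2 ≤ ℓ) (hk : ℓ < k)
    (hkm : k = ℓ * m)
    (hsub : ∀ n : ℕ, 1 ≤ n → n ≤ ℓ - 1 → n ∈ S) (hkS : k ∈ S)
    (hA : IsIndepSet S A) (y : ℤ) :
    (A ∩ Set.Ico y (y + ((k:ℤ) + 1))).ncard ≤ m := by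
  by_contra hcon
  push_neg at hcon
  set T := A ∩ Set.Ico y (y + ((k:ℤ) + 1)) with hT
  have hTfin : T.Finite := (Set.finite_Ico _ _).inter_of_right _
  have hTne : T.Nonempty := Set.nonempty_of_ncard_ne_zero (by omega)
  have hFne : hTfin.toFinset.Nonempty := by
    rwa [Set.Finite.toFinset_nonempty]
  set a := hTfin.toFinset.min' hFne with hadef
  set b := hTfin.toFinset.max' hFne with hbdef
  have haT : a ∈ T := by
    have := hTfin.toFinset.min'_mem hFne
    rwa [Set.Finite.mem_toFinset] at this
  have hbT : b ∈ T := by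
    have := hTfin.toFinset.max'_mem hFne
    rwa [Set.Finite.mem_toFinset] at this
  have hbounds : ∀ x ∈ T, a ≤ x ∧ x ≤ b := by
    intro x hx
    rw [← Set.Finite.mem_toFinset hTfin] at hx
    exact ⟨hTfin.toFinset.min'_le x hx, hTfin.toFinset.le_max' x hx⟩
  have hba : b - a ≤ (k:ℤ) := by
    obtain ⟨_, ha1, ha2⟩ := haT
    obtain ⟨_, hb1, hb2⟩ := hbT
    omega
  rcases eq_or_lt_of_le hba with heq | hlt
  · have hab : a ≠ b := by omega
    have : (a - b).natAbs = k := by omega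
    exact hA a haT.1 b hbT.1 hab (this ▸ hkS)
  · have hsubT : T ⊆ A ∩ Set.Ico a (a + (m:ℤ) * ℓ) := by
      intro x hx
      obtain ⟨hx1, hx2⟩ := hbounds x hx
      refine ⟨hx.1, ?_⟩
      simp only [Set.mem_Ico]
      have hml : (m:ℤ) * (ℓ:ℤ) = (k:ℤ) := by rw [hkm]; push_cast; ring
      rw [hml]
      omega
    have h1 : T.ncard ≤ (A ∩ Set.Ico a (a + (m:ℤ) * ℓ)).ncard :=
      Set.ncard_le_ncard hsubT ((Set.finite_Ico _ _).inter_of_right _)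
    have h2 : (A ∩ Set.Ico a (a + (m:ℤ) * ℓ)).ncard ≤ m * 1 :=
      win_le A (ℓ:ℤ) (by exact_mod_cast (by omega : 0 < ℓ)) 1
        (indep_window_one S A ℓ hℓ hsub hA) m a
    omega

end Aux

/-- The independence ratio of `G({1, ..., ℓ-1, k})` for `k > ℓ ≥ 2`. -/
theorem indRatio_interval_and_k (ℓ k : ℕ) (hℓ : 2 ≤ ℓ) (hk : ℓ < k) :
    (¬ ℓ ∣ k → indRatio (insert k (Finset.Icc 1 (ℓ - 1))) = 1 / (ℓ : ℝ)) ∧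
    (ℓ ∣ k → indRatio (insert k (Finset.Icc 1 (ℓ - 1))) = (k : ℝ) / ((ℓ : ℝ) * ((k : ℝ) + 1))) := by
  set S := insert k (Finset.Icc 1 (ℓ - 1)) with hS
  have hmem : ∀ n : ℕ, n ∈ S ↔ n = k ∨ (1 ≤ n ∧ n ≤ ℓ - 1) := by
    intro n; simp [hS, Finset.mem_insert, Finset.mem_Icc]
  have hsubS : ∀ n : ℕ, 1 ≤ n → n ≤ ℓ - 1 → n ∈ S := fun n h1 h2 => (hmem n).mpr (Or.inr ⟨h1, h2⟩)
  have hkS : k ∈ S := (hmem k).mpr (Or.inl rfl)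
  have hℓpos : (0:ℤ) < (ℓ:ℤ) := by exact_mod_cast (by omega : 0 < ℓ)
  constructor
  · -- case ℓ ∤ k
    intro hnd
    set A₁ : Set ℤ := {x : ℤ | x % (ℓ:ℤ) ∈ ({0} : Set ℤ)} with hA₁
    have hindep : IsIndepSet S A₁ := by
      intro a ha b hb hab hmem'
      simp only [hA₁, Set.mem_setOf_eq, Set.mem_singleton_iff] at ha hb
      have hda : (ℓ:ℤ) ∣ a := Int.dvd_of_emod_eq_zero ha
      have hdb : (ℓ:ℤ) ∣ b := Int.dvd_of_emod_eq_zero hb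
      have hd : (ℓ:ℤ) ∣ (a - b) := dvd_sub hda hdb
      have hd' : ℓ ∣ (a - b).natAbs := by
        have := Int.natAbs_dvd_natAbs.mpr hd
        simpa using this
      rcases (hmem _).mp hmem' with h | ⟨h1, h2⟩
      · exact hnd (h ▸ hd')
      · have := Nat.le_of_dvd (by omega) hd'
        omega
    have hcount : ∀ y : ℤ, (A₁ ∩ Set.Ico y (y + (ℓ:ℤ))).ncard = 1 := by
      intro y
      rw [periodic_count (ℓ:ℤ) hℓpos {0} (by
        intro r hr; simp only [Set.mem_singleton_iff] at hr; subst hr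
        simp only [Set.mem_Ico]; omega) y]
      simp
    have hdens : density A₁ = (1:ℝ) / ℓ := by
      have := density_eq A₁ ℓ 1 (by omega) hcount
      simpa using this
    have hub : ∀ x ∈ density '' {A : Set ℤ | IsIndepSet S A}, x ≤ (1:ℝ) / ℓ := by
      rintro x ⟨A, hA, rfl⟩
      have := density_le A ℓ 1 (by omega) (indep_window_one S A ℓ hℓ hsubS hA)
      simpa using this
    have hmem2 : (1:ℝ)/ℓ ∈ density '' {A : Set ℤ | IsIndepSet S A} := ⟨A₁, hindep, hdens⟩
    exact le_antisymm (csSup_le ⟨_, hmem2⟩ hub) (le_csSup ⟨_, hub⟩ hmem2)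
  · -- case ℓ ∣ k
    rintro ⟨m, hkm⟩
    have hm1 : 1 ≤ m := by
      rcases Nat.eq_zero_or_pos m with h | h
      · subst h; simp at hkm; omega
      · omega
    have hppos : (0:ℤ) < (k:ℤ) + 1 := by positivity
    set R₂ : Set ℤ := (fun j => (ℓ:ℤ) * j) '' Set.Ico (0:ℤ) (m:ℤ) with hR₂
    have hRsub : R₂ ⊆ Set.Ico 0 ((k:ℤ) + 1) := by
      rintro r ⟨j, hj, rfl⟩
      simp only [Set.mem_Ico] at hj ⊢
      constructor
      · exact mul_nonneg hℓpos.le hj.1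
      · have h1 : (ℓ:ℤ) * j ≤ (ℓ:ℤ) * ((m:ℤ) - 1) := by
          apply mul_le_mul_of_nonneg_left (by omega) hℓpos.le
        have h2 : (ℓ:ℤ) * (m:ℤ) = (k:ℤ) := by exact_mod_cast hkm.symm
        nlinarith
    have hRcard : R₂.ncard = m := by
      rw [hR₂, R2_card (ℓ:ℤ) (m:ℤ) hℓpos]
      simp
    set A₂ : Set ℤ := {x : ℤ | x % ((k:ℤ) + 1) ∈ R₂} with hA₂
    have hlm : (ℓ:ℤ) * (m:ℤ) = (k:ℤ) := by exact_mod_cast hkm.symm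
    have hresid : ∀ x ∈ A₂, (ℓ:ℤ) ∣ x % ((k:ℤ)+1) ∧ 0 ≤ x % ((k:ℤ)+1) ∧
        x % ((k:ℤ)+1) ≤ (k:ℤ) - ℓ := by
      rintro x ⟨j, hj, hx⟩
      simp only [Set.mem_Ico] at hj
      refine ⟨⟨j, hx.symm⟩, ?_, ?_⟩
      · rw [← hx]; exact mul_nonneg hℓpos.le hj.1
      · rw [← hx]
        have h1 : (ℓ:ℤ) * j ≤ (ℓ:ℤ) * ((m:ℤ) - 1) := by
          apply mul_le_mul_of_nonneg_left (by omega) hℓpos.le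
        show (ℓ:ℤ) * j ≤ (k:ℤ) - ℓ
        nlinarith
    have hindep : IsIndepSet S A₂ := by
      intro a ha b hb hab hmem'
      obtain ⟨hdva, ha0, ha1⟩ := hresid a ha
      obtain ⟨hdvb, hb0, hb1⟩ := hresid b hb
      set p : ℤ := (k:ℤ) + 1 with hp
      set ra := a % p with hra
      set rb := b % p with hrb
      have hdvd : p ∣ (a - b) - (ra - rb) := by
        have e1 : a - ra = p * (a / p) := by rw [hra, Int.emod_def]; ring
        have e2 : b - rb = p * (b / p) := by rw [hrb, Int.emod_def]; ring
        exact ⟨a / p - b / p, by linarith [e1, e2, mul_sub p (a/p) (b/p)]⟩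
      have hdrr : (ℓ:ℤ) ∣ ra - rb := dvd_sub hdva hdvb
      obtain ⟨t, ht⟩ := hdvd
      rcases (hmem _).mp hmem' with hcase | ⟨h1, h2⟩
      · -- |a - b| = k
        have hd : a - b = (k:ℤ) ∨ a - b = -(k:ℤ) := by omega
        have hbnd : -(2*p) < p * t ∧ p * t < 2*p := by
          rcases hd with h | h <;> constructor <;> omega
        have ht2 : t = -1 ∨ t = 0 ∨ t = 1 := by
          by_contra hcontra
          have h' : t ≤ -2 ∨ 2 ≤ t := by omega
          have hp0 : (0:ℤ) < p := hppos
          rcases h' with h' | h'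
          · nlinarith [hbnd.1]
          · nlinarith [hbnd.2]
        have hsmall : ∀ v : ℤ, ra - rb = v → (v = 1 ∨ v = -1) → False := by
          intro v hv hv1
          have hdv : (ℓ:ℤ) ∣ v := hv ▸ hdrr
          have hle1 : (ℓ:ℤ) ≤ 1 := by
            rcases hv1 with rfl | rfl
            · exact Int.le_of_dvd one_pos hdv
            · exact Int.le_of_dvd one_pos (dvd_neg.mp hdv)
          omega
        rcases ht2 with rfl | rfl | rfl <;> rcases hd with hdd | hdd
        · omega
        · exact hsmall 1 (by omega) (Or.inl rfl)
        · omega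
        · omega
        · exact hsmall (-1) (by omega) (Or.inr rfl)
        · omega
      · -- 1 ≤ |a-b| ≤ ℓ-1
        have habs : (a - b) - (ra - rb) = 0 := by
          apply Int.eq_zero_of_abs_lt_dvd ⟨t, ht⟩
          rw [abs_lt]
          omega
        have hd2 : (ℓ:ℤ) ∣ (a - b) := by
          have : a - b = ra - rb := by omega
          rw [this]; exact hdrr
        have hle : (ℓ:ℤ) ≤ |a - b| :=
          Int.le_of_dvd (abs_pos.mpr (sub_ne_zero.mpr hab)) ((dvd_abs _ _).mpr hd2)
        rw [Int.abs_eq_natAbs] at hle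
        omega
    have hcount : ∀ y : ℤ, (A₂ ∩ Set.Ico y (y + ((k + 1 : ℕ):ℤ))).ncard = m := by
      intro y
      have hc : ((k + 1 : ℕ):ℤ) = (k:ℤ) + 1 := by push_cast; ring
      rw [hc]
      exact (periodic_count ((k:ℤ)+1) hppos R₂ hRsub y).trans hRcard
    have hdens : density A₂ = (m:ℝ) / ((k+1:ℕ):ℝ) := density_eq A₂ (k+1) m (by omega) hcount
    have hℓ0 : (ℓ:ℝ) ≠ 0 := by positivity
    have hk10 : (k:ℝ) + 1 ≠ 0 := by positivity
    have hBeq : (m:ℝ) / ((k+1:ℕ):ℝ) = (k : ℝ) / ((ℓ : ℝ) * ((k : ℝ) + 1)) := by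
      have hk' : (k:ℝ) = (ℓ:ℝ) * (m:ℝ) := by exact_mod_cast hkm
      push_cast
      rw [hk']
      field_simp
    have hdens' : density A₂ = (k : ℝ) / ((ℓ : ℝ) * ((k : ℝ) + 1)) := hdens.trans hBeq
    have hub : ∀ x ∈ density '' {A : Set ℤ | IsIndepSet S A},
        x ≤ (k : ℝ) / ((ℓ : ℝ) * ((k : ℝ) + 1)) := by
      rintro x ⟨A, hA, rfl⟩
      have hw : ∀ y : ℤ, (A ∩ Set.Ico y (y + ((k + 1 : ℕ):ℤ))).ncard ≤ m := by
        intro y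
        have hc : ((k + 1 : ℕ):ℤ) = (k:ℤ) + 1 := by push_cast; ring
        rw [hc]
        exact indep_window_m S A ℓ k m hℓ hk hkm hsubS hkS hA y
      calc density A ≤ (m:ℝ) / ((k+1:ℕ):ℝ) := density_le A (k+1) m (by omega) hw
        _ = _ := hBeq
    have hmem2 : (k : ℝ) / ((ℓ : ℝ) * ((k : ℝ) + 1)) ∈
        density '' {A : Set ℤ | IsIndepSet S A} := ⟨A₂, hindep, hdens'⟩
    exact le_antisymm (csSup_le ⟨_, hmem2⟩ hub) (le_csSup ⟨_, hub⟩ hmem2)
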